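/- arXiv:1508.06493 — 2 statements merged into one kernel-verified Lean document; each statement's English description precedes it below -/
import Mathlib

section
/- Laver forcing is weakly homogeneous: for all Laver conditions p and q there exists an automorphism π of the partial order 𝕃 of Laver conditions such that π(p) and q are compatible (i.e., have a common lower bound). -/
/-- A set of finite sequences of naturals is closed under initial segments. -/
def PrefixClosed (p : Set (List ℕ)) : Prop := ∀ s ∈ p, ∀ t, t <+: s → t ∈ p

/-- `t` is the stem of `p`: `t ∈ p`, every `s ∈ p` is an initial segment of `t` or
extends `t`, and `t` is of maximal length with this property. -/
def IsStem (p : Set (List ℕ)) (t : List ℕ) : Prop :=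
  t ∈ p ∧ (∀ s ∈ p, s <+: t ∨ t <+: s) ∧
    ∀ t' ∈ p, (∀ s ∈ p, s <+: t' ∨ t' <+: s) → t'.length ≤ t.length

/-- `p` is a Laver condition: nonempty, closed under initial segments, has a stem `tp`,
and every `u ∈ p` extending the stem has infinitely many one-element extensions in `p`. -/
def IsLaverCond (p : Set (List ℕ)) : Prop :=
  p.Nonempty ∧ PrefixClosed p ∧
    ∃ tp, IsStem p tp ∧ ∀ u ∈ p, tp <+: u → {n : ℕ | u ++ [n] ∈ p}.Infinite

/-- The set 𝕃 of Laver conditions, ordered by `p ≤ q ↔ p ⊆ q`. -/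
abbrev LaverCond := {p : Set (List ℕ) // IsLaverCond p}


-- ===== HMap machinery (paste from t3) =====
def HMap (C : List ℕ → List ℕ → ℕ ≃ ℕ) : List ℕ → List ℕ → List ℕ → List ℕ
  | _, _, [] => []
  | u, w, n :: l => C u w n :: HMap C (u ++ [n]) (w ++ [C u w n]) l

def DMap (C : List ℕ → List ℕ → ℕ ≃ ℕ) : List ℕ → List ℕ → ℕ ≃ ℕ :=
  fun a b => (C b a).symm

lemma DMap_DMap (C : List ℕ → List ℕ → ℕ ≃ ℕ) : DMap (DMap C) = C := by
  funext a b; simp [DMap]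

lemma HMap_length (C : List ℕ → List ℕ → ℕ ≃ ℕ) :
    ∀ (l u w : List ℕ), (HMap C u w l).length = l.length := by
  intro l
  induction l with
  | nil => intro u w; rfl
  | cons n l ih => intro u w; simp [HMap, ih]

lemma HMap_append (C : List ℕ → List ℕ → ℕ ≃ ℕ) :
    ∀ (l₁ l₂ u w : List ℕ),
      HMap C u w (l₁ ++ l₂) = HMap C u w l₁ ++ HMap C (u ++ l₁) (w ++ HMap C u w l₁) l₂ := by
  intro l₁
  induction l₁ with
  | nil => intro l₂ u w; simp [HMap]
  | cons n l ih =>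
      intro l₂ u w
      simp only [List.cons_append, HMap, List.append_eq, ih, List.append_assoc,
        List.singleton_append, List.nil_append]

lemma DMap_HMap (C : List ℕ → List ℕ → ℕ ≃ ℕ) :
    ∀ (l u w : List ℕ), HMap (DMap C) w u (HMap C u w l) = l := by
  intro l
  induction l with
  | nil => intro u w; rfl
  | cons n l ih =>
      intro u w
      simp only [HMap, DMap, Equiv.symm_apply_apply]
      rw [ih]

lemma HMap_DMap (C : List ℕ → List ℕ → ℕ ≃ ℕ) (l u w : List ℕ) :
    HMap C u w (HMap (DMap C) w u l) = l := by
  conv_lhs => rw [← DMap_DMap C]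
  exact DMap_HMap (DMap C) l w u

def HEquiv (C : List ℕ → List ℕ → ℕ ≃ ℕ) : List ℕ ≃ List ℕ where
  toFun := HMap C [] []
  invFun := HMap (DMap C) [] []
  left_inv := fun l => DMap_HMap C l [] []
  right_inv := fun l => HMap_DMap C l [] []

lemma HEquiv_DMap_comp (C : List ℕ → List ℕ → ℕ ≃ ℕ) (l : List ℕ) :
    HEquiv (DMap C) (HEquiv C l) = l := DMap_HMap C l [] []

lemma HEquiv_comp_DMap (C : List ℕ → List ℕ → ℕ ≃ ℕ) (l : List ℕ) :
    HEquiv C (HEquiv (DMap C) l) = l := HMap_DMap C l [] []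

lemma HMap_prefix (C : List ℕ → List ℕ → ℕ ≃ ℕ) {l₁ l₂ : List ℕ} (u w : List ℕ)
    (h : l₁ <+: l₂) : HMap C u w l₁ <+: HMap C u w l₂ := by
  obtain ⟨r, rfl⟩ := h
  rw [HMap_append]
  exact ⟨_, rfl⟩

lemma HEquiv_prefix_iff (C : List ℕ → List ℕ → ℕ ≃ ℕ) {l₁ l₂ : List ℕ} :
    HEquiv C l₁ <+: HEquiv C l₂ ↔ l₁ <+: l₂ := by
  constructor
  · intro h
    have := HMap_prefix (DMap C) [] [] h
    rwa [show HMap (DMap C) [] [] (HEquiv C l₁) = l₁ from DMap_HMap C l₁ [] [],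
      show HMap (DMap C) [] [] (HEquiv C l₂) = l₂ from DMap_HMap C l₂ [] []] at this
  · exact HMap_prefix C [] []

lemma HEquiv_length (C : List ℕ → List ℕ → ℕ ≃ ℕ) (l : List ℕ) :
    (HEquiv C l).length = l.length := HMap_length C l [] []

lemma HEquiv_snoc (C : List ℕ → List ℕ → ℕ ≃ ℕ) (l : List ℕ) (n : ℕ) :
    HEquiv C (l ++ [n]) = HEquiv C l ++ [C l (HEquiv C l) n] := by
  show HMap C [] [] (l ++ [n]) = _
  rw [HMap_append]
  rfl

lemma HEquiv_take (C : List ℕ → List ℕ → ℕ ≃ ℕ) (l : List ℕ) (k : ℕ) :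
    HEquiv C (l.take k) = (HEquiv C l).take k := by
  have h1 : HEquiv C (l.take k) <+: HEquiv C l :=
    (HEquiv_prefix_iff C).2 (List.take_prefix k l)
  have h2 := List.prefix_iff_eq_take.1 h1
  rw [h2, HEquiv_length, List.length_take]
  rcases le_or_gt k l.length with h | h
  · rw [min_eq_left h]
  · rw [min_eq_right h.le, List.take_of_length_le (le_of_eq (HEquiv_length C l)),
      List.take_of_length_le (by rw [HEquiv_length]; exact h.le)]

-- ===== good permutations (paste from t2) =====
lemma exists_good_perm (A B : Set ℕ) (hA : A.Infinite) (hB : B.Infinite) :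
    ∃ σ : ℕ ≃ ℕ, {n | n ∈ A ∧ σ n ∈ B}.Infinite := by
  classical
  set A₀ : Set ℕ := Nat.nth (· ∈ A) '' {n | Even n} with hA₀def
  set B₀ : Set ℕ := Nat.nth (· ∈ B) '' {n | Even n} with hB₀def
  have hAn : Function.Injective (Nat.nth (· ∈ A)) := Nat.nth_injective hA
  have hBn : Function.Injective (Nat.nth (· ∈ B)) := Nat.nth_injective hB
  have hevens : {n : ℕ | Even n}.Infinite := by
    have : Set.range (fun n => 2 * n) ⊆ {n : ℕ | Even n} := by
      rintro x ⟨n, rfl⟩; exact ⟨n, (two_mul n)⟩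
    exact Set.Infinite.mono this (Set.infinite_range_of_injective (fun a b h => by omega))
  have hodds : {n : ℕ | ¬ Even n}.Infinite := by
    have : Set.range (fun n => 2 * n + 1) ⊆ {n : ℕ | ¬ Even n} := by
      rintro x ⟨n, rfl⟩; simp [Nat.even_add_one, parity_simps]
    exact Set.Infinite.mono this (Set.infinite_range_of_injective (fun a b h => by omega))
  have hA₀A : A₀ ⊆ A := by rintro x ⟨n, _, rfl⟩; exact Nat.nth_mem_of_infinite hA n
  have hB₀B : B₀ ⊆ B := by rintro x ⟨n, _, rfl⟩; exact Nat.nth_mem_of_infinite hB n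
  have hA₀ : A₀.Infinite := hevens.image (hAn.injOn)
  have hB₀ : B₀.Infinite := hevens.image (hBn.injOn)
  have hA₀c : A₀ᶜ.Infinite := by
    apply Set.Infinite.mono (s := Nat.nth (· ∈ A) '' {n | ¬ Even n}) _ (hodds.image hAn.injOn)
    rintro x ⟨n, hn, rfl⟩ ⟨m, hm, hme⟩
    exact hn (hAn hme ▸ hm)
  have hB₀c : B₀ᶜ.Infinite := by
    apply Set.Infinite.mono (s := Nat.nth (· ∈ B) '' {n | ¬ Even n}) _ (hodds.image hBn.injOn)
    rintro x ⟨n, hn, rfl⟩ ⟨m, hm, hme⟩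
    exact hn (hBn hme ▸ hm)
  haveI := hA₀.to_subtype
  haveI := hB₀.to_subtype
  haveI := hA₀c.to_subtype
  haveI := hB₀c.to_subtype
  haveI : Denumerable A₀ := Nat.Subtype.denumerable _
  haveI : Denumerable B₀ := Nat.Subtype.denumerable _
  haveI : Denumerable ↥A₀ᶜ := Nat.Subtype.denumerable _
  haveI : Denumerable ↥B₀ᶜ := Nat.Subtype.denumerable _
  let e1 : A₀ ≃ B₀ := (Denumerable.eqv _).trans (Denumerable.eqv _).symm
  let e2 : ↥A₀ᶜ ≃ ↥B₀ᶜ := (Denumerable.eqv _).trans (Denumerable.eqv _).symm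
  let σ : ℕ ≃ ℕ :=
    (Equiv.Set.sumCompl A₀).symm.trans ((e1.sumCongr e2).trans (Equiv.Set.sumCompl B₀))
  refine ⟨σ, Set.Infinite.mono ?_ hA₀⟩
  intro a ha
  refine ⟨hA₀A ha, ?_⟩
  have : σ a = ↑(e1 ⟨a, ha⟩) := by
    simp only [σ, Equiv.trans_apply, Equiv.Set.sumCompl_symm_apply_of_mem ha,
      Equiv.sumCongr_apply, Sum.map_inl, Equiv.Set.sumCompl_apply_inl]
  rw [this]
  exact hB₀B (e1 ⟨a, ha⟩).2

open Classical in
noncomputable def permChoice (A B : Set ℕ) : ℕ ≃ ℕ :=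
  if h : A.Infinite ∧ B.Infinite then (exists_good_perm A B h.1 h.2).choose else Equiv.refl ℕ

lemma permChoice_spec {A B : Set ℕ} (hA : A.Infinite) (hB : B.Infinite) :
    {n | n ∈ A ∧ permChoice A B n ∈ B}.Infinite := by
  classical
  rw [permChoice]
  rw [dif_pos ⟨hA, hB⟩]
  exact (exists_good_perm A B hA hB).choose_spec

-- ===== Laver lemmas (paste from t4) =====
lemma isStem_of_two_succ {r : Set (List ℕ)} {u : List ℕ} (hu : u ∈ r)
    (hcomp : ∀ x ∈ r, x <+: u ∨ u <+: x)
    (h2 : ∃ n₁ n₂ : ℕ, n₁ ≠ n₂ ∧ u ++ [n₁] ∈ r ∧ u ++ [n₂] ∈ r) : IsStem r u := by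
  refine ⟨hu, hcomp, ?_⟩
  intro t' ht' hcomp'
  by_contra hlen
  push_neg at hlen
  obtain ⟨n₁, n₂, hne, h1, h2⟩ := h2
  have key : ∀ n : ℕ, u ++ [n] ∈ r → u ++ [n] <+: t' := by
    intro n hn
    rcases hcomp' _ hn with h | h
    · exact h
    · have hle := h.length_le
      simp only [List.length_append, List.length_singleton] at hle
      have : t'.length = u.length + 1 := by omega
      have := List.prefix_iff_eq_take.1 h
      rw [List.take_of_length_le (by simp; omega)] at this
      rw [this]
  have p1 := key n₁ h1
  have p2 := key n₂ h2
  have e1 := List.prefix_iff_eq_take.1 p1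
  have e2 := List.prefix_iff_eq_take.1 p2
  simp only [List.length_append, List.length_singleton] at e1 e2
  have : u ++ [n₁] = u ++ [n₂] := e1.trans e2.symm
  exact hne (by simpa using this)

lemma laver_restrict {p : Set (List ℕ)} {s u : List ℕ}
    (hpc : PrefixClosed p)
    (hsucc : ∀ v ∈ p, s <+: v → {n : ℕ | v ++ [n] ∈ p}.Infinite)
    (hu : u ∈ p) (hsu : s <+: u) :
    u ∈ {w ∈ p | w <+: u ∨ u <+: w} ∧
      PrefixClosed {w ∈ p | w <+: u ∨ u <+: w} ∧
      IsStem {w ∈ p | w <+: u ∨ u <+: w} u ∧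
      (∀ v ∈ {w ∈ p | w <+: u ∨ u <+: w}, u <+: v →
        {n : ℕ | v ++ [n] ∈ {w ∈ p | w <+: u ∨ u <+: w}}.Infinite) := by
  set r : Set (List ℕ) := {w ∈ p | w <+: u ∨ u <+: w} with hr
  have hur : u ∈ r := ⟨hu, Or.inl (List.prefix_refl u)⟩
  have hrpc : PrefixClosed r := by
    rintro w ⟨hwp, hwu⟩ t htw
    refine ⟨hpc w hwp t htw, ?_⟩
    rcases hwu with h | h
    · exact Or.inl (htw.trans h)
    · exact List.prefix_or_prefix_of_prefix htw h
  have hsuccr : ∀ v ∈ r, u <+: v → {n : ℕ | v ++ [n] ∈ r}.Infinite := by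
    rintro v ⟨hvp, _⟩ huv
    have := hsucc v hvp (hsu.trans huv)
    apply Set.Infinite.mono _ this
    intro n hn
    exact ⟨hn, Or.inr (huv.trans ⟨[n], rfl⟩)⟩
  have hcompr : ∀ x ∈ r, x <+: u ∨ u <+: x := fun x hx => hx.2
  have hstem : IsStem r u := by
    apply isStem_of_two_succ hur hcompr
    have h2 := (hsuccr u hur (List.prefix_refl u))
    obtain ⟨t0, ht0⟩ := h2.nonempty
    obtain ⟨t1, ht1, hne01⟩ := (h2.diff (Set.finite_singleton t0)).nonempty
    exact ⟨t1, t0, by simpa using hne01, ht1, ht0⟩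
  exact ⟨hur, hrpc, hstem, hsuccr⟩

lemma laver_extend_stem {p : Set (List ℕ)} {s : List ℕ}
    (hsucc : ∀ v ∈ p, s <+: v → {n : ℕ | v ++ [n] ∈ p}.Infinite) (hs : s ∈ p) :
    ∀ m : ℕ, ∃ u ∈ p, s <+: u ∧ u.length = s.length + m := by
  intro m
  induction m with
  | zero => exact ⟨s, hs, List.prefix_refl s, rfl⟩
  | succ k ih =>
      obtain ⟨u, hup, hsu, hlen⟩ := ih
      obtain ⟨n, hn⟩ := (hsucc u hup hsu).nonempty
      exact ⟨u ++ [n], hn, hsu.trans ⟨[n], rfl⟩, by simp [hlen]; omega⟩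

-- ===== image of a Laver condition =====
lemma prefixClosed_image (C : List ℕ → List ℕ → ℕ ≃ ℕ) {p : Set (List ℕ)}
    (hpc : PrefixClosed p) : PrefixClosed (HEquiv C '' p) := by
  rintro x ⟨v, hv, rfl⟩ t ht
  have h1 : t = (HEquiv C v).take t.length := List.prefix_iff_eq_take.1 ht
  rw [← HEquiv_take] at h1
  exact ⟨v.take t.length, hpc v hv _ (List.take_prefix _ _), h1.symm⟩

lemma isStem_image (C : List ℕ → List ℕ → ℕ ≃ ℕ) {p : Set (List ℕ)} {s : List ℕ}
    (hs : IsStem p s) : IsStem (HEquiv C '' p) (HEquiv C s) := by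
  refine ⟨⟨s, hs.1, rfl⟩, ?_, ?_⟩
  · rintro x ⟨v, hv, rfl⟩
    rcases hs.2.1 v hv with h | h
    · exact Or.inl ((HEquiv_prefix_iff C).2 h)
    · exact Or.inr ((HEquiv_prefix_iff C).2 h)
  · rintro t' ⟨v, hv, rfl⟩ hcomp
    rw [HEquiv_length, HEquiv_length]
    apply hs.2.2 v hv
    intro y hy
    rcases hcomp (HEquiv C y) ⟨y, hy, rfl⟩ with h | h
    · exact Or.inl ((HEquiv_prefix_iff C).1 h)
    · exact Or.inr ((HEquiv_prefix_iff C).1 h)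

lemma succ_image (C : List ℕ → List ℕ → ℕ ≃ ℕ) {p : Set (List ℕ)} {s : List ℕ}
    (hsucc : ∀ v ∈ p, s <+: v → {n : ℕ | v ++ [n] ∈ p}.Infinite) :
    ∀ x ∈ HEquiv C '' p, HEquiv C s <+: x →
      {m : ℕ | x ++ [m] ∈ HEquiv C '' p}.Infinite := by
  rintro x ⟨v, hv, rfl⟩ hsx
  have hsv : s <+: v := (HEquiv_prefix_iff C).1 hsx
  have hinf := hsucc v hv hsv
  apply Set.Infinite.mono (s := (C v (HEquiv C v)) '' {n | v ++ [n] ∈ p}) _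
    (hinf.image ((C v (HEquiv C v)).injective.injOn))
  rintro m ⟨n, hn, rfl⟩
  exact ⟨v ++ [n], hn, HEquiv_snoc C v n⟩

lemma laver_image (C : List ℕ → List ℕ → ℕ ≃ ℕ) {p : Set (List ℕ)}
    (hp : IsLaverCond p) : IsLaverCond (HEquiv C '' p) := by
  obtain ⟨hne, hpc, tp, htp, hsucc⟩ := hp
  exact ⟨hne.image _, prefixClosed_image C hpc, HEquiv C tp, isStem_image C htp,
    succ_image C hsucc⟩

/-- Laver forcing is weakly homogeneous: for all Laver conditions `p`, `q` there is an
automorphism `π` of 𝕃 such that `π p` and `q` are compatible (have a common lower bound). -/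
theorem laver_weakly_homogeneous (p q : LaverCond) :
    ∃ π : LaverCond ≃ LaverCond,
      (∀ a b : LaverCond, a.val ⊆ b.val ↔ (π a).val ⊆ (π b).val) ∧
      ∃ r : LaverCond, r.val ⊆ (π p).val ∧ r.val ⊆ q.val := by
  classical
  obtain ⟨P, hPne, hPpc, s, hPs, hPsucc⟩ := p
  obtain ⟨Q, hQne, hQpc, t, hQt, hQsucc⟩ := q
  set m : ℕ := max s.length t.length with hm
  -- extend stems to length m
  obtain ⟨s', hs'P, hss', hs'len⟩ := laver_extend_stem hPsucc hPs.1 (m - s.length)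
  obtain ⟨t', ht'Q, htt', ht'len⟩ := laver_extend_stem hQsucc hQt.1 (m - t.length)
  have hs'm : s'.length = m := by omega
  have ht'm : t'.length = m := by omega
  -- restrict
  set P' : Set (List ℕ) := {w ∈ P | w <+: s' ∨ s' <+: w} with hP'
  set Q' : Set (List ℕ) := {w ∈ Q | w <+: t' ∨ t' <+: w} with hQ'
  obtain ⟨hs'P', hP'pc, hP'stem, hP'succ⟩ := laver_restrict hPpc hPsucc hs'P hss'
  obtain ⟨ht'Q', hQ'pc, hQ'stem, hQ'succ⟩ := laver_restrict hQpc hQsucc ht'Q htt'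
  have hP'sub : P' ⊆ P := fun w hw => hw.1
  have hQ'sub : Q' ⊆ Q := fun w hw => hw.1
  -- the system of permutations
  set C : List ℕ → List ℕ → ℕ ≃ ℕ := fun u w =>
    if u.length < m then Equiv.swap (s'.getD u.length 0) (t'.getD u.length 0)
    else permChoice {n | u ++ [n] ∈ P'} {n | w ++ [n] ∈ Q'} with hC
  -- the automorphism
  set e : List ℕ ≃ List ℕ := HEquiv C with he
  refine ⟨⟨fun a => ⟨e '' a.val, laver_image C a.2⟩,
    fun a => ⟨HEquiv (DMap C) '' a.val, laver_image (DMap C) a.2⟩, ?_, ?_⟩, ?_, ?_⟩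
  · intro a
    apply Subtype.ext
    show HEquiv (DMap C) '' (e '' a.val) = a.val
    rw [← Set.image_comp]
    have : (HEquiv (DMap C)) ∘ e = id := funext fun l => HEquiv_DMap_comp C l
    rw [this, Set.image_id]
  · intro a
    apply Subtype.ext
    show e '' (HEquiv (DMap C) '' a.val) = a.val
    rw [← Set.image_comp]
    have : e ∘ (HEquiv (DMap C)) = id := funext fun l => HEquiv_comp_DMap C l
    rw [this, Set.image_id]
  · intro a b
    exact (Set.image_subset_image_iff (HEquiv C).injective).symm
  · -- the common extension
    -- key: e maps s' to t'
    have key : ∀ i, i ≤ m → e (s'.take i) = t'.take i := by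
      intro i
      induction i with
      | zero => intro _; rfl
      | succ k ih =>
          intro hk
          have hk' : k < m := by omega
          have hks : k < s'.length := by omega
          have hkt : k < t'.length := by omega
          have h1 : s'.take (k + 1) = s'.take k ++ [s'.getD k 0] := by
            rw [List.take_succ, List.getElem?_eq_getElem hks]
            simp [List.getD_eq_getElem?_getD, List.getElem?_eq_getElem hks]
          have h2 : t'.take (k + 1) = t'.take k ++ [t'.getD k 0] := by
            rw [List.take_succ, List.getElem?_eq_getElem hkt]
            simp [List.getD_eq_getElem?_getD, List.getElem?_eq_getElem hkt]
          rw [h1, h2]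
          show HEquiv C (s'.take k ++ [s'.getD k 0]) = _
          rw [HEquiv_snoc, ih (by omega)]
          have hlen : (s'.take k).length < m := by
            rw [List.length_take]; omega
          have : C (s'.take k) (t'.take k) = Equiv.swap (s'.getD (s'.take k).length 0)
              (t'.getD (s'.take k).length 0) := if_pos hlen
          rw [this, List.length_take, min_eq_left (by omega), Equiv.swap_apply_left]
    have hst : e s' = t' := by
      have := key m (le_refl m)
      rwa [List.take_of_length_le (by omega), List.take_of_length_le (by omega)] at this
    -- r := e '' P' ∩ Q'
    set R : Set (List ℕ) := (e '' P') ∩ Q' with hR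
    have ht'R : t' ∈ R := ⟨⟨s', hs'P', hst⟩, ht'Q'⟩
    have hRpc : PrefixClosed R := by
      intro x hx y hy
      exact ⟨prefixClosed_image C hP'pc x hx.1 y hy, hQ'pc x hx.2 y hy⟩
    have hRsucc : ∀ x ∈ R, t' <+: x → {n : ℕ | x ++ [n] ∈ R}.Infinite := by
      rintro x ⟨⟨v, hvP', rfl⟩, hxQ'⟩ htx
      have hsv : s' <+: v := by
        rw [← hst] at htx
        exact (HEquiv_prefix_iff C).1 htx
      have hA : {n : ℕ | v ++ [n] ∈ P'}.Infinite := hP'succ v hvP' hsv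
      have hB : {n : ℕ | (e v) ++ [n] ∈ Q'}.Infinite := hQ'succ (e v) hxQ' htx
      have hvlen : ¬ v.length < m := by
        have := hsv.length_le
        omega
      have hCv : C v (e v) = permChoice {n | v ++ [n] ∈ P'} {n | (e v) ++ [n] ∈ Q'} :=
        if_neg hvlen
      have hS := permChoice_spec hA hB
      set σ := permChoice {n | v ++ [n] ∈ P'} {n | (e v) ++ [n] ∈ Q'} with hσ
      apply Set.Infinite.mono (s := σ '' {n | n ∈ {n | v ++ [n] ∈ P'} ∧ σ n ∈ {n | (e v) ++ [n] ∈ Q'}})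
        _ (hS.image (σ.injective.injOn))
      rintro y ⟨n, ⟨hn1, hn2⟩, rfl⟩
      refine ⟨⟨v ++ [n], hn1, ?_⟩, hn2⟩
      show HEquiv C (v ++ [n]) = e v ++ [σ n]
      rw [HEquiv_snoc, hCv]
    have hRstem : IsStem R t' := by
      apply isStem_of_two_succ ht'R
      · intro x hx
        exact hQ'stem.2.1 x hx.2
      · have h2 := hRsucc t' ht'R (List.prefix_refl t')
        obtain ⟨n0, hn0⟩ := h2.nonempty
        obtain ⟨n1, hn1, hne01⟩ := (h2.diff (Set.finite_singleton n0)).nonempty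
        exact ⟨n1, n0, by simpa using hne01, hn1, hn0⟩
    refine ⟨⟨R, ⟨t', ht'R⟩, hRpc, t', hRstem, hRsucc⟩, ?_, ?_⟩
    · intro x hx
      obtain ⟨v, hv, rfl⟩ := hx.1
      exact ⟨v, hP'sub hv, rfl⟩
    · intro x hx
      exact hQ'sub hx.2
end

section
/- If p and q are Laver conditions whose stems have equal length, then there exist Laver conditions p' ⊆ p and q' ⊆ q, having the same stems as p and q respectively, and an automorphism π of the partial order 𝕃 of Laver conditions such that π(p') = q'. -/
namespace LaverAux

/-- children set -/
def chil (P : Set (List ℕ)) (v : List ℕ) : Set ℕ := {n | v ++ [n] ∈ P}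

/-- thin out an infinite set of naturals to an infinite co-infinite one -/
noncomputable def thin (C : Set ℕ) : Set ℕ := Set.range (fun k => Nat.nth (· ∈ C) (2 * k))

lemma thin_subset {C : Set ℕ} (hC : C.Infinite) : thin C ⊆ C := by
  rintro _ ⟨k, rfl⟩
  exact Nat.nth_mem_of_infinite (by simpa using hC) (2 * k)

lemma thin_infinite {C : Set ℕ} (hC : C.Infinite) : (thin C).Infinite := by
  apply Set.infinite_range_of_injective
  intro a b hab
  have := Nat.nth_injective (p := (· ∈ C)) (by simpa using hC) hab
  omega

lemma thin_compl_infinite {C : Set ℕ} (hC : C.Infinite) : (thin C)ᶜ.Infinite := by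
  have hsub : Set.range (fun k => Nat.nth (· ∈ C) (2 * k + 1)) ⊆ (thin C)ᶜ := by
    rintro _ ⟨k, rfl⟩ ⟨j, hj⟩
    have := Nat.nth_injective (p := (· ∈ C)) (by simpa using hC) hj
    omega
  refine Set.Infinite.mono hsub ?_
  apply Set.infinite_range_of_injective
  intro a b hab
  have := Nat.nth_injective (p := (· ∈ C)) (by simpa using hC) hab
  omega

/-- a permutation of ℕ mapping A onto B, provided both are infinite and co-infinite -/
noncomputable def bijOn (A B : Set ℕ) : ℕ ≃ ℕ := by
  classical
  exact if h : A.Infinite ∧ Aᶜ.Infinite ∧ B.Infinite ∧ Bᶜ.Infinite then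
    haveI := h.1.to_subtype
    haveI := h.2.1.to_subtype
    haveI := h.2.2.1.to_subtype
    haveI := h.2.2.2.to_subtype
    (Equiv.Set.sumCompl A).symm.trans
      ((Equiv.sumCongr (Classical.choice (nonempty_equiv_of_countable (α := A) (β := B)))
        (Classical.choice (nonempty_equiv_of_countable (α := ↥Aᶜ) (β := ↥Bᶜ)))).trans
        (Equiv.Set.sumCompl B))
  else Equiv.refl ℕ

lemma bijOn_mem {A B : Set ℕ} (hA : A.Infinite) (hA' : Aᶜ.Infinite) (hB : B.Infinite)
    (hB' : Bᶜ.Infinite) {a : ℕ} (ha : a ∈ A) : bijOn A B a ∈ B := by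
  classical
  rw [bijOn]
  rw [dif_pos ⟨hA, hA', hB, hB'⟩]
  simp only [Equiv.trans_apply]
  rw [Equiv.Set.sumCompl_symm_apply_of_mem ha]
  simp only [Equiv.sumCongr_apply, Sum.map_inl, Equiv.Set.sumCompl_apply_inl]
  exact Subtype.mem _

end LaverAux


namespace LaverAux

variable (σ : List ℕ → List ℕ → ℕ ≃ ℕ)

/-- recursive map on reversed lists -/
def frev : List ℕ → List ℕ
  | [] => []
  | m :: r => σ r.reverse (frev r).reverse m :: frev r

/-- the induced map on lists -/
def fmap (s : List ℕ) : List ℕ := (frev σ s.reverse).reverse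

@[simp] lemma fmap_nil : fmap σ [] = [] := rfl

lemma fmap_concat (s : List ℕ) (m : ℕ) :
    fmap σ (s ++ [m]) = fmap σ s ++ [σ s (fmap σ s) m] := by
  simp [fmap, frev]

@[simp] lemma frev_length (r : List ℕ) : (frev σ r).length = r.length := by
  induction r with
  | nil => rfl
  | cons m r ih => simp [frev, ih]

@[simp] lemma fmap_length (s : List ℕ) : (fmap σ s).length = s.length := by
  simp [fmap]

lemma fmap_take (s : List ℕ) : ∀ k, fmap σ (s.take k) = (fmap σ s).take k := by
  induction s using List.reverseRecOn with
  | nil => simp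
  | append_singleton s m ih =>
    intro k
    rcases le_or_gt k s.length with h | h
    · rw [List.take_append_of_le_length h, ih, fmap_concat,
        List.take_append_of_le_length (by simpa using h)]
    · have h1 : s ++ [m] = (s ++ [m]).take k := by
        rw [List.take_of_length_le]; simpa using h
      rw [← h1]
      have h2 : fmap σ (s ++ [m]) = (fmap σ (s ++ [m])).take k := by
        rw [List.take_of_length_le]; simpa using h
      rw [← h2]

lemma fmap_injective : Function.Injective (fmap σ) := by
  intro s
  induction s using List.reverseRecOn with
  | nil =>
    intro t ht
    have : t.length = 0 := by
      have := fmap_length σ t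
      rw [← ht] at this; simpa using this.symm
    simpa using (List.length_eq_zero_iff.mp this).symm
  | append_singleton s m ih =>
    intro t ht
    induction t using List.reverseRecOn with
    | nil =>
      exfalso
      have := fmap_length σ (s ++ [m])
      rw [ht] at this; simp at this
    | append_singleton t c _ =>
      rw [fmap_concat, fmap_concat] at ht
      have h0 := congrArg List.length ht
      simp only [List.length_append, List.length_singleton, fmap_length] at h0
      have hlen : (fmap σ s).length = (fmap σ t).length := by
        simp only [fmap_length]; omega
      obtain ⟨h1, h2⟩ := List.append_inj ht (by simpa using hlen)
      have hst : s = t := ih h1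
      subst hst
      have : σ s (fmap σ s) m = σ s (fmap σ s) c := by simpa using h2
      have := (σ s (fmap σ s)).injective this
      rw [this]

lemma fmap_surjective : Function.Surjective (fmap σ) := by
  intro t
  induction t using List.reverseRecOn with
  | nil => exact ⟨[], rfl⟩
  | append_singleton t c ih =>
    obtain ⟨s, rfl⟩ := ih
    exact ⟨s ++ [(σ s (fmap σ s)).symm c], by rw [fmap_concat, Equiv.apply_symm_apply]⟩

lemma fmap_prefix_iff (s t : List ℕ) : s <+: t ↔ fmap σ s <+: fmap σ t := by
  constructor
  · intro h
    rw [List.prefix_iff_eq_take] at h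
    rw [List.prefix_iff_eq_take, fmap_length]
    conv_lhs => rw [h]
    rw [fmap_take]
  · intro h
    rw [List.prefix_iff_eq_take] at h
    rw [fmap_length, ← fmap_take] at h
    have := fmap_injective σ h
    rw [this]
    exact List.take_prefix _ _

end LaverAux

namespace LaverAux

lemma concat_getD (t : List ℕ) (x : ℕ) : (t ++ [x]).getD t.length 0 = x := by
  rw [List.getD_eq_getElem _ _ (by simp)]
  exact List.getElem_concat_length rfl _

lemma eq_concat_of_prefix {t l : List ℕ} (h : t <+: l) (hl : l.length = t.length + 1) :
    l = t ++ [l.getD t.length 0] := by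
  obtain ⟨r, rfl⟩ := h
  have hr : r.length = 1 := by simp at hl; omega
  obtain ⟨x, rfl⟩ := List.length_eq_one_iff.mp hr
  rw [concat_getD]

lemma prefix_getD {u s : List ℕ} (h : u <+: s) {i : ℕ} (hi : i < u.length) :
    u.getD i 0 = s.getD i 0 := by
  obtain ⟨r, rfl⟩ := h
  rw [List.getD_append _ _ _ _ hi]

lemma prefix_take {u s : List ℕ} (h : u <+: s) {i : ℕ} (hi : i ≤ u.length) :
    u.take i = s.take i := by
  obtain ⟨r, rfl⟩ := h
  rw [List.take_append_of_le_length hi]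

lemma stem_unique {P : Set (List ℕ)} {a b : List ℕ} (ha : IsStem P a) (hb : IsStem P b) :
    a = b := by
  have h1 : a.length ≤ b.length := hb.2.2 a ha.1 ha.2.1
  have h2 : b.length ≤ a.length := ha.2.2 b hb.1 hb.2.1
  rcases hb.2.1 a ha.1 with h | h
  · exact h.eq_of_length (le_antisymm h1 h2)
  · exact (h.eq_of_length (le_antisymm h2 h1)).symm

/-- the thinned condition with stem `t` inside `P` -/
noncomputable def pthin (P : Set (List ℕ)) (t : List ℕ) : Set (List ℕ) :=
  {s | s <+: t} ∪ {s | t <+: s ∧ s ∈ P ∧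
    ∀ i, t.length ≤ i → i < s.length → s.getD i 0 ∈ thin (chil P (s.take i))}

section
variable {P : Set (List ℕ)} {t : List ℕ}

lemma stem_mem_pthin : t ∈ pthin P t := Or.inl List.prefix_rfl

lemma pthin_subset (hP : IsLaverCond P) (hst : IsStem P t) : pthin P t ⊆ P := by
  rintro s (hs | hs)
  · exact hP.2.1 t hst.1 s hs
  · exact hs.2.1

lemma pthin_sub_elim (hst : IsStem P t) {u : List ℕ} (hu : u ∈ pthin P t) (htu : t <+: u) :
    u ∈ P ∧ ∀ i, t.length ≤ i → i < u.length → u.getD i 0 ∈ thin (chil P (u.take i)) := by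
  rcases hu with hu | hu
  · have : u = t := hu.eq_of_length (le_antisymm hu.length_le htu.length_le)
    subst this
    exact ⟨hst.1, fun i h1 h2 => absurd (h1.trans_lt h2) (lt_irrefl _)⟩
  · exact hu.2

lemma pthin_prefixClosed (hcl : PrefixClosed P) : PrefixClosed (pthin P t) := by
  rintro s (hs | hs) u hus
  · exact Or.inl (hus.trans hs)
  · rcases le_or_gt u.length t.length with h | h
    · exact Or.inl (List.prefix_of_prefix_length_le hus hs.1 h)
    · refine Or.inr ⟨List.prefix_of_prefix_length_le hs.1 hus h.le, ?_, ?_⟩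
      · exact hcl s hs.2.1 u hus
      · intro i h1 h2
        rw [prefix_getD hus h2, prefix_take hus h2.le]
        exact hs.2.2 i h1 (h2.trans_le hus.length_le)
end

end LaverAux

namespace LaverAux

section
variable {P : Set (List ℕ)} {t : List ℕ}

lemma laver_branch (hP : IsLaverCond P) (hst : IsStem P t) :
    ∀ u ∈ P, t <+: u → (chil P u).Infinite := by
  obtain ⟨t0, hst0, hbr⟩ := hP.2.2
  have := stem_unique hst0 hst
  subst this
  exact hbr

lemma pthin_child_mem (hP : IsLaverCond P) (hst : IsStem P t) {u : List ℕ}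
    (hu : u ∈ pthin P t) (htu : t <+: u) {n : ℕ} (hn : n ∈ thin (chil P u)) :
    u ++ [n] ∈ pthin P t := by
  obtain ⟨huP, hcond⟩ := pthin_sub_elim hst hu htu
  have hCu : (chil P u).Infinite := laver_branch hP hst u huP htu
  refine Or.inr ⟨htu.trans ⟨[n], rfl⟩, thin_subset hCu hn, ?_⟩
  intro i h1 h2
  have h2' : i < u.length + 1 := by simpa using h2
  rcases Nat.lt_succ_iff_lt_or_eq.mp h2' with h | h
  · rw [← prefix_getD ⟨[n], rfl⟩ h, ← prefix_take ⟨[n], rfl⟩ h.le]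
    exact hcond i h1 h
  · subst h
    rw [concat_getD, List.take_append_of_le_length le_rfl, List.take_length]
    exact hn

lemma pthin_chil_infinite (hP : IsLaverCond P) (hst : IsStem P t) {u : List ℕ}
    (hu : u ∈ pthin P t) (htu : t <+: u) : (chil (pthin P t) u).Infinite := by
  have hCu := laver_branch hP hst u (pthin_sub_elim hst hu htu).1 htu
  refine (thin_infinite hCu).mono ?_
  intro n hn
  exact pthin_child_mem hP hst hu htu hn

lemma pthin_stem (hP : IsLaverCond P) (hst : IsStem P t) : IsStem (pthin P t) t := by
  refine ⟨stem_mem_pthin, ?_, ?_⟩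
  · rintro s (hs | hs)
    exacts [Or.inl hs, Or.inr hs.1]
  · intro t' ht' hcomp
    by_contra hlen
    push_neg at hlen
    have htt' : t <+: t' := by
      rcases ht' with h | h
      · exact absurd h.length_le (by omega)
      · exact h.1
    obtain ⟨ht'P, hcond⟩ := pthin_sub_elim hst ht' htt'
    have hteq : t = t'.take t.length := List.prefix_iff_eq_take.mp htt'
    have haa : t'.getD t.length 0 ∈ thin (chil P t) := by
      have h := hcond t.length le_rfl hlen
      rwa [← hteq] at h
    set a := t'.getD t.length 0 with ha
    have hCt : (chil P t).Infinite := laver_branch hP hst t hst.1 List.prefix_rfl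
    obtain ⟨b, hb⟩ := ((thin_infinite hCt).diff (Set.finite_singleton a)).nonempty
    have hba : b ≠ a := by simpa using hb.2
    have htb : t ++ [b] ∈ pthin P t :=
      pthin_child_mem hP hst stem_mem_pthin List.prefix_rfl hb.1
    rcases hcomp (t ++ [b]) htb with h | h
    · have hgb : (t ++ [b]).getD t.length 0 = t'.getD t.length 0 :=
        prefix_getD h (by simp)
      rw [concat_getD] at hgb
      exact hba hgb
    · have hl : t'.length = t.length + 1 := le_antisymm (by simpa using h.length_le) hlen
      have h2 : t' = t ++ [b] := h.eq_of_length (by simp [hl])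
      have h3 : t' = t ++ [a] := eq_concat_of_prefix htt' hl
      rw [h2] at h3
      have := List.append_inj_right h3.symm rfl
      simp only [List.cons.injEq, and_true] at this
      exact hba this.symm

lemma pthin_laver (hP : IsLaverCond P) (hst : IsStem P t) : IsLaverCond (pthin P t) :=
  ⟨⟨t, stem_mem_pthin⟩, pthin_prefixClosed hP.2.1, t, pthin_stem hP hst,
    fun u hu htu => pthin_chil_infinite hP hst hu htu⟩

end

end LaverAux

namespace LaverAux

section
variable (e : List ℕ ≃ List ℕ)

lemma symm_pre (hpre : ∀ s t, s <+: t ↔ e s <+: e t) :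
    ∀ s t, s <+: t ↔ e.symm s <+: e.symm t := by
  intro s t
  have h := hpre (e.symm s) (e.symm t)
  rw [e.apply_symm_apply, e.apply_symm_apply] at h
  exact h.symm

lemma symm_len (hlen : ∀ s, (e s).length = s.length) :
    ∀ s, (e.symm s).length = s.length := by
  intro s
  have h := hlen (e.symm s)
  rw [e.apply_symm_apply] at h
  exact h.symm

lemma image_stem (hpre : ∀ s t, s <+: t ↔ e s <+: e t)
    (hlen : ∀ s, (e s).length = s.length)
    {P : Set (List ℕ)} {t : List ℕ} (h : IsStem P t) :
    IsStem (e '' P) (e t) := by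
  refine ⟨⟨t, h.1, rfl⟩, ?_, ?_⟩
  · rintro _ ⟨w, hw, rfl⟩
    rcases h.2.1 w hw with h' | h'
    exacts [Or.inl ((hpre _ _).mp h'), Or.inr ((hpre _ _).mp h')]
  · rintro _ ⟨w, hw, rfl⟩ hcomp
    rw [hlen, hlen]
    refine h.2.2 w hw ?_
    intro s hs
    rcases hcomp (e s) ⟨s, hs, rfl⟩ with h' | h'
    exacts [Or.inl ((hpre _ _).mpr h'), Or.inr ((hpre _ _).mpr h')]

lemma image_laver (hpre : ∀ s t, s <+: t ↔ e s <+: e t)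
    (hlen : ∀ s, (e s).length = s.length)
    {P : Set (List ℕ)} (hP : IsLaverCond P) : IsLaverCond (e '' P) := by
  obtain ⟨hne, hcl, t0, hst, hbr⟩ := hP
  refine ⟨hne.image e, ?_, e t0, image_stem e hpre hlen hst, ?_⟩
  · rintro _ ⟨w, hw, rfl⟩ u hu
    have h1 : e (e.symm u) <+: e w := by rwa [Equiv.apply_symm_apply]
    exact ⟨e.symm u, hcl w hw _ ((hpre _ _).mpr h1), Equiv.apply_symm_apply e u⟩
  · rintro _ ⟨v, hv, rfl⟩ htv
    have htv' : t0 <+: v := (hpre _ _).mpr htv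
    have hCv : Set.Infinite {n | v ++ [n] ∈ P} := hbr v hv htv'
    set c : ℕ → ℕ := fun k => (e (v ++ [k])).getD (e v).length 0 with hc
    have hkey : ∀ k, e (v ++ [k]) = e v ++ [c k] := by
      intro k
      have h1 : e v <+: e (v ++ [k]) := (hpre _ _).mp ⟨[k], rfl⟩
      have h2 : (e (v ++ [k])).length = (e v).length + 1 := by rw [hlen, hlen]; simp
      exact eq_concat_of_prefix h1 h2
    have hinj : Set.InjOn c {n | v ++ [n] ∈ P} := by
      intro k _ k' _ hkk
      have h3 : e (v ++ [k]) = e (v ++ [k']) := by rw [hkey k, hkey k', hkk]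
      have h4 := e.injective h3
      simpa using List.append_inj_right h4 rfl
    refine Set.Infinite.mono ?_ (hCv.image hinj)
    rintro _ ⟨k, hk, rfl⟩
    exact ⟨v ++ [k], hk, hkey k⟩

end

end LaverAux

namespace LaverAux

noncomputable def sigma (p q : Set (List ℕ)) (tp tq : List ℕ) (s t : List ℕ) : ℕ ≃ ℕ :=
  if s.length < tp.length then Equiv.swap (tp.getD s.length 0) (tq.getD s.length 0)
  else bijOn (thin (chil p s)) (thin (chil q t))

section
variable {p q : Set (List ℕ)} {tp tq : List ℕ}

lemma stem_map (hlen : tp.length = tq.length) :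
    ∀ k, k ≤ tp.length → fmap (sigma p q tp tq) (tp.take k) = tq.take k := by
  intro k
  induction k with
  | zero => simp
  | succ k ih =>
    intro hk
    have hk' : k < tp.length := hk
    have hk'' : k < tq.length := by omega
    have h1 : tp.take (k + 1) = tp.take k ++ [tp.getD k 0] := by
      rw [List.take_succ, List.getElem?_eq_getElem hk', List.getD_eq_getElem _ _ hk']
      rfl
    have h2 : tq.take (k + 1) = tq.take k ++ [tq.getD k 0] := by
      rw [List.take_succ, List.getElem?_eq_getElem hk'', List.getD_eq_getElem _ _ hk'']
      rfl
    rw [h1, fmap_concat, ih hk'.le, h2]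
    congr 1
    have hlk : (tp.take k).length = k := by simp [hk'.le]
    rw [sigma, if_pos (by rw [hlk]; exact hk'), hlk]
    simp [Equiv.swap_apply_left]

lemma fmap_stem (hlen : tp.length = tq.length) : fmap (sigma p q tp tq) tp = tq := by
  have h := stem_map (p := p) (q := q) hlen tp.length le_rfl
  rwa [List.take_length, hlen, List.take_length] at h

lemma map_into (hp : IsLaverCond p) (hq : IsLaverCond q)
    (hsp : IsStem p tp) (hsq : IsStem q tq) (hlen : tp.length = tq.length) :
    ∀ s ∈ pthin p tp, fmap (sigma p q tp tq) s ∈ q := by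
  intro s
  induction s using List.reverseRecOn with
  | nil =>
    intro _
    exact hq.2.1 tq hsq.1 [] List.nil_prefix
  | append_singleton s m ih =>
    intro hsm
    have hs : s ∈ pthin p tp := pthin_prefixClosed hp.2.1 _ hsm s ⟨[m], rfl⟩
    rcases hsm with hL | hR
    · have h1 : s ++ [m] = tp.take (s ++ [m]).length := List.prefix_iff_eq_take.mp hL
      rw [h1, stem_map hlen _ hL.length_le]
      exact hq.2.1 tq hsq.1 _ (List.take_prefix _ _)
    · obtain ⟨htps, hmem, hcond⟩ := hR
      rcases lt_or_ge s.length tp.length with hc | hc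
      · have hle : (s ++ [m]).length ≤ tp.length := by
          simp only [List.length_append, List.length_singleton]; omega
        have htp : s ++ [m] = tp := (htps.eq_of_length
          (le_antisymm htps.length_le hle)).symm
        rw [htp, fmap_stem hlen]
        exact hsq.1
      · have htps' : tp <+: s := List.prefix_of_prefix_length_le htps ⟨[m], rfl⟩ hc
        have hsp' : s ∈ p := (pthin_sub_elim hsp hs htps').1
        have hFs : fmap (sigma p q tp tq) s ∈ q := ih hs
        have htqFs : tq <+: fmap (sigma p q tp tq) s := by
          have h := (fmap_prefix_iff (sigma p q tp tq) tp s).mp htps'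
          rwa [fmap_stem hlen] at h
        have hCp : (chil p s).Infinite := laver_branch hp hsp s hsp' htps'
        have hCq : (chil q (fmap (sigma p q tp tq) s)).Infinite :=
          laver_branch hq hsq _ hFs htqFs
        have hm : m ∈ thin (chil p s) := by
          have h := hcond s.length hc (by simp)
          rwa [concat_getD, List.take_append_of_le_length le_rfl, List.take_length] at h
        rw [fmap_concat]
        have hσ : sigma p q tp tq s (fmap (sigma p q tp tq) s) m
            ∈ thin (chil q (fmap (sigma p q tp tq) s)) := by
          rw [sigma, if_neg (not_lt.mpr hc)]
          exact bijOn_mem (thin_infinite hCp) (thin_compl_infinite hCp)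
            (thin_infinite hCq) (thin_compl_infinite hCq) hm
        exact thin_subset hCq hσ

end

end LaverAux

open LaverAux

/-- If `p` and `q` are Laver conditions whose stems `tp`, `tq` have equal length, then
there are Laver conditions `p' ⊆ p` and `q' ⊆ q` with the same stems `tp`, `tq`
respectively, and an automorphism `π` of 𝕃 with `π p' = q'`. -/

theorem laver_thinned_automorphism (p q : Set (List ℕ)) (tp tq : List ℕ)
    (hp : IsLaverCond p) (hq : IsLaverCond q)
    (hsp : IsStem p tp) (hsq : IsStem q tq) (hlen : tp.length = tq.length) :
    ∃ p' q' : LaverCond, p'.val ⊆ p ∧ q'.val ⊆ q ∧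
      IsStem p'.val tp ∧ IsStem q'.val tq ∧
      ∃ π : LaverCond ≃ LaverCond,
        (∀ a b : LaverCond, a.val ⊆ b.val ↔ (π a).val ⊆ (π b).val) ∧ π p' = q' := by
  classical
  have hbij : Function.Bijective (fmap (sigma p q tp tq)) :=
    ⟨fmap_injective _, fmap_surjective _⟩
  set e : List ℕ ≃ List ℕ := Equiv.ofBijective _ hbij with he
  have hpre' : ∀ s t, s <+: t ↔ e s <+: e t := fun s t => fmap_prefix_iff _ s t
  have hlen' : ∀ s, (e s).length = s.length := fun s => fmap_length _ s
  have hplav : IsLaverCond (pthin p tp) := pthin_laver hp hsp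
  refine ⟨⟨pthin p tp, hplav⟩, ⟨e '' pthin p tp, image_laver e hpre' hlen' hplav⟩,
    pthin_subset hp hsp, ?_, pthin_stem hp hsp, ?_, ?_⟩
  · rintro _ ⟨s, hs, rfl⟩
    exact map_into hp hq hsp hsq hlen s hs
  · have h := image_stem e hpre' hlen' (pthin_stem hp hsp)
    rwa [show e tp = tq from fmap_stem hlen] at h
  · refine ⟨⟨fun r => ⟨e '' r.1, image_laver e hpre' hlen' r.2⟩,
      fun r => ⟨e.symm '' r.1, image_laver e.symm (symm_pre e hpre') (symm_len e hlen') r.2⟩,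
      fun r => Subtype.ext (Equiv.symm_image_image e r.1),
      fun r => Subtype.ext (by simpa using Equiv.symm_image_image e.symm r.1)⟩, ?_, ?_⟩
    · intro a b
      exact (Set.image_subset_image_iff e.injective).symm
    · apply Subtype.ext
      rfl
end
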